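/- Single-round stability of RandLMSPar: let G_a and G_b be leveled straight-line grammars over the same terminal alphabet Σ using the same fingerprint family H, with memoized fingerprints F_a and F_b. Let T_a be a string over the symbols of G_a and T_b a string over the symbols of G_b, and suppose there are intervals [a..b] in T_a and [a'..b'] in T_b of equal length d = b−a = b'−a' such that for every offset 0 ≤ u ≤ d the parse trees of T_a[a+u] and T_b[a'+u] have identical topology and identical leaf strings. Then for every offset t with 1 ≤ t ≤ d such that there exists an index j with a+t ≤ j < b and F_a[T_a[j]] ≠ F_a[T_a[j+1]], position a+t is a RandLMSPar break of T_a if and only if position a'+t is a RandLMSPar break of T_b. -/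

import Mathlib

/-- Position `ℓ` of the string `T[1..n]` is L-type (Nong et al.'s classification):
`T[ℓ] > T[ℓ+1]`, or `T[ℓ] = T[ℓ+1]` and `ℓ+1` is L-type. -/
def isLType {α : Type*} [LinearOrder α] (T : ℕ → α) (n ℓ : ℕ) : Prop :=
  if _h : ℓ < n then
    T (ℓ + 1) < T ℓ ∨ (T ℓ = T (ℓ + 1) ∧ isLType T n (ℓ + 1))
  else False
termination_by n - ℓ
decreasing_by omega

/-- Position `ℓ` of the string `T[1..n]` is S-type:
`T[ℓ] < T[ℓ+1]`, or `T[ℓ] = T[ℓ+1]` and `ℓ+1` is S-type. -/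
def isSType {α : Type*} [LinearOrder α] (T : ℕ → α) (n ℓ : ℕ) : Prop :=
  if _h : ℓ < n then
    T ℓ < T (ℓ + 1) ∨ (T ℓ = T (ℓ + 1) ∧ isSType T n (ℓ + 1))
  else False
termination_by n - ℓ
decreasing_by omega

/-- Position `ℓ` lies in the maximal equal-symbol run suffix of `T[1..n]`. -/
def inRunSuffix {α : Type*} (T : ℕ → α) (n ℓ : ℕ) : Prop :=
  ∀ i, ℓ ≤ i → i < n → T i = T (i + 1)

/-- Position `ℓ` of `T[1..n]` is LMS-type: `ℓ ≥ 2`, `ℓ` is S-type and `ℓ-1` is L-type. -/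
def isLMS {α : Type*} [LinearOrder α] (T : ℕ → α) (n ℓ : ℕ) : Prop :=
  2 ≤ ℓ ∧ isSType T n ℓ ∧ isLType T n (ℓ - 1)

/-- The level of a grammar symbol: terminals have level 0, a nonterminal `X` has
level `level X`. -/
def symLevelAux {α N : Type*} (level : N → ℕ) : α ⊕ N → ℕ
  | .inl _ => 0
  | .inr Y => level Y

/-- A leveled straight-line grammar over the terminal alphabet `α` with nonterminals `N`:
every nonterminal `X` has level ≥ 1 and exactly one rule `X → rhs X`, whose right-hand
side is nonempty and consists of symbols of level `level X - 1` (terminals = level 0). -/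
structure LeveledSLG (α : Type*) (N : Type*) where
  level : N → ℕ
  rhs : N → List (α ⊕ N)
  level_pos : ∀ X, 1 ≤ level X
  rhs_ne : ∀ X, rhs X ≠ []
  rhs_level : ∀ X, ∀ s ∈ rhs X, symLevelAux level s = level X - 1

namespace LeveledSLG

variable {α N : Type*}

/-- Level of a symbol of the grammar `G`. -/
def symLevel (G : LeveledSLG α N) (s : α ⊕ N) : ℕ := symLevelAux G.level s

theorem symLevel_lt_of_mem_rhs (G : LeveledSLG α N) {X : N} {s : α ⊕ N}
    (h : s ∈ G.rhs X) : G.symLevel s < G.symLevel (Sum.inr X) := by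
  have h1 := G.rhs_level X s h
  have h2 := G.level_pos X
  simp only [symLevel, symLevelAux] at h1 ⊢
  omega

/-- The expansion of a grammar symbol: `exp(s) = s` for a terminal `s`, and
`exp(X) = exp(Q[1])⋯exp(Q[q])` for a nonterminal `X → Q[1..q]`. -/
def expSym (G : LeveledSLG α N) : α ⊕ N → List α
  | .inl s => [s]
  | .inr X => ((G.rhs X).attach).flatMap (fun s => G.expSym s.1)
termination_by s => G.symLevel s
decreasing_by exact G.symLevel_lt_of_mem_rhs s.2

end LeveledSLG

/-- Ordered rooted trees with `β`-labelled leaves. -/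
inductive RTree (β : Type*) where
  | leaf : β → RTree β
  | node : List (RTree β) → RTree β

namespace LeveledSLG

/-- The parse tree `PT(s)` of a grammar symbol: a terminal is a leaf, and the parse
tree of a nonterminal `X → Q[1..q]` is a node with the subtrees `PT(Q[1]), …, PT(Q[q])`. -/
def parseTree {α N : Type*} (G : LeveledSLG α N) : α ⊕ N → RTree α
  | .inl s => .leaf s
  | .inr X => .node (((G.rhs X).attach).map (fun s => G.parseTree s.1))
termination_by s => G.symLevel s
decreasing_by exact G.symLevel_lt_of_mem_rhs s.2

end LeveledSLG
/-- A fingerprint family `H`: a base function `h0` on terminals and, for each level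
`i ≥ 1`, a prime `p i`, integers `a i, b i, c i ∈ [1..p i - 1]` and a range `m i ≥ 1`. -/
structure FPFamily (α : Type*) where
  h0 : α → ℕ
  p : ℕ → ℕ
  a : ℕ → ℕ
  b : ℕ → ℕ
  c : ℕ → ℕ
  m : ℕ → ℕ
  p_prime : ∀ i, 1 ≤ i → (p i).Prime
  a_mem : ∀ i, 1 ≤ i → 1 ≤ a i ∧ a i ≤ p i - 1
  b_mem : ∀ i, 1 ≤ i → 1 ≤ b i ∧ b i ≤ p i - 1
  c_mem : ∀ i, 1 ≤ i → 1 ≤ c i ∧ c i ≤ p i - 1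
  m_pos : ∀ i, 1 ≤ i → 1 ≤ m i

/-- `polyVal c [f₁, …, f_q] = Σ_{j=1}^{q} f_j · c^(j-1)`. -/
def polyVal (c : ℕ) : List ℕ → ℕ
  | [] => 0
  | f :: fs => f + c * polyVal c fs

/-- The fingerprint of an ordered rooted tree with `α`-labelled leaves, the second
argument being the level of the root: `fp(leaf s) = h0 s`, and the fingerprint of an
internal node at level `i` with children fingerprints `f₁, …, f_q` is
`((a i · Σ_j f_j · (c i)^(j-1) + b i) mod p i) mod m i`. -/
def fpTree {α : Type*} (H : FPFamily α) : RTree α → ℕ → ℕ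
  | .leaf s, _ => H.h0 s
  | .node ts, i =>
      ((H.a i * polyVal (H.c i) (ts.attach.map fun t => fpTree H t.1 (i - 1)) + H.b i)
          % H.p i) % H.m i
termination_by t _ => sizeOf t
decreasing_by
  have h := List.sizeOf_lt_of_mem t.2
  simp only [RTree.node.sizeOf_spec]
  omega

namespace LeveledSLG

/-- The memoized fingerprint of the grammar symbols: `F[s] = h0 s` for a terminal `s`
and, for a level-`i` nonterminal `X → Q[1..q]`,
`F[X] = ((a i · Σ_j F[Q[j]] · (c i)^(j-1) + b i) mod p i) mod m i`. -/
def memoF {α N : Type*} (G : LeveledSLG α N) (H : FPFamily α) : α ⊕ N → ℕ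
  | .inl s => H.h0 s
  | .inr X =>
      ((H.a (G.level X) * polyVal (H.c (G.level X))
            ((G.rhs X).attach.map fun s => G.memoF H s.1) +
          H.b (G.level X)) % H.p (G.level X)) % H.m (G.level X)
termination_by s => G.symLevel s
decreasing_by exact G.symLevel_lt_of_mem_rhs s.2

end LeveledSLG

/-- single-round stability of RandLMSPar. Let `G_a`, `G_b` be leveled
SLGs over the same terminal alphabet using the same fingerprint family `H`, and let
`T_a[1..na]`, `T_b[1..nb]` be strings over their respective symbols. RandLMSPar
classifies positions by applying Nong et al.'s types to the fingerprint sequences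
`F_a[T_a[1..na]]`, `F_b[T_b[1..nb]]`; a break is an LMS-type position. If the intervals
`[a..b]` of `T_a` and `[a'..b']` of `T_b` have equal length and the parse trees of
`T_a[a+u]` and `T_b[a'+u]` have identical topology and identical leaf strings for every
offset `0 ≤ u ≤ b-a`, then for every offset `1 ≤ t ≤ b-a` such that some `j` with
`a+t ≤ j < b` satisfies `F_a[T_a[j]] ≠ F_a[T_a[j+1]]`, position `a+t` is a RandLMSPar
break of `T_a` iff position `a'+t` is a RandLMSPar break of `T_b`. -/
theorem isSType_congr {α : Type*} [LinearOrder α] (T T' : ℕ → α) :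
    ∀ (k : ℕ) (n n' ℓ ℓ' : ℕ), (∀ u, u ≤ k + 1 → T (ℓ + u) = T' (ℓ' + u)) →
    T (ℓ + k) ≠ T (ℓ + k + 1) → ℓ + k < n → ℓ' + k < n' →
    (isSType T n ℓ ↔ isSType T' n' ℓ') := by
  intro k
  induction k with
  | zero =>
    intro n n' ℓ ℓ' heq hne hn hn'
    rw [isSType.eq_def T n ℓ, isSType.eq_def T' n' ℓ']
    simp only [Nat.add_zero] at hne hn hn'
    have h0 := heq 0 (by omega); have h1 := heq 1 (by omega)
    simp only [Nat.add_zero] at h0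
    rw [dif_pos hn, dif_pos hn', ← h0, ← h1]
    constructor <;> rintro (h | ⟨h, -⟩)
    exacts [Or.inl h, absurd h hne, Or.inl h, absurd h hne]
  | succ k ih =>
    intro n n' ℓ ℓ' heq hne hn hn'
    rw [isSType.eq_def T n ℓ, isSType.eq_def T' n' ℓ']
    have h0 := heq 0 (by omega); have h1 := heq 1 (by omega)
    simp only [Nat.add_zero] at h0
    rw [dif_pos (by omega), dif_pos (by omega), ← h0, ← h1]
    rcases lt_trichotomy (T ℓ) (T (ℓ + 1)) with h | h | h
    · simp [h]
    · have hrec : isSType T n (ℓ + 1) ↔ isSType T' n' (ℓ' + 1) := by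
        apply ih n n' (ℓ + 1) (ℓ' + 1)
        · intro u hu
          have := heq (u + 1) (by omega)
          simpa [Nat.add_assoc, Nat.add_comm 1 u] using this
        · have e : ℓ + 1 + k = ℓ + (k + 1) := by omega
          rw [e]; exact hne
        · omega
        · omega
      simp [h, hrec, lt_irrefl]
    · constructor <;> rintro (h' | ⟨h', -⟩)
      exacts [absurd h' (not_lt.2 h.le), absurd h' h.ne.symm,
        absurd h' (not_lt.2 h.le), absurd h' h.ne.symm]

theorem isLType_congr {α : Type*} [LinearOrder α] (T T' : ℕ → α) :
    ∀ (k : ℕ) (n n' ℓ ℓ' : ℕ), (∀ u, u ≤ k + 1 → T (ℓ + u) = T' (ℓ' + u)) →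
    T (ℓ + k) ≠ T (ℓ + k + 1) → ℓ + k < n → ℓ' + k < n' →
    (isLType T n ℓ ↔ isLType T' n' ℓ') := by
  intro k
  induction k with
  | zero =>
    intro n n' ℓ ℓ' heq hne hn hn'
    rw [isLType.eq_def T n ℓ, isLType.eq_def T' n' ℓ']
    simp only [Nat.add_zero] at hne hn hn'
    have h0 := heq 0 (by omega); have h1 := heq 1 (by omega)
    simp only [Nat.add_zero] at h0
    rw [dif_pos hn, dif_pos hn', ← h0, ← h1]
    constructor <;> rintro (h | ⟨h, -⟩)
    exacts [Or.inl h, absurd h hne, Or.inl h, absurd h hne]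
  | succ k ih =>
    intro n n' ℓ ℓ' heq hne hn hn'
    rw [isLType.eq_def T n ℓ, isLType.eq_def T' n' ℓ']
    have h0 := heq 0 (by omega); have h1 := heq 1 (by omega)
    simp only [Nat.add_zero] at h0
    rw [dif_pos (by omega), dif_pos (by omega), ← h0, ← h1]
    rcases lt_trichotomy (T (ℓ + 1)) (T ℓ) with h | h | h
    · simp [h]
    · have hrec : isLType T n (ℓ + 1) ↔ isLType T' n' (ℓ' + 1) := by
        apply ih n n' (ℓ + 1) (ℓ' + 1)
        · intro u hu
          have := heq (u + 1) (by omega)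
          simpa [Nat.add_assoc, Nat.add_comm 1 u] using this
        · have e : ℓ + 1 + k = ℓ + (k + 1) := by omega
          rw [e]; exact hne
        · omega
        · omega
      simp [h, hrec, lt_irrefl]
    · constructor <;> rintro (h' | ⟨h', -⟩)
      exacts [absurd h' (not_lt.2 h.le), absurd h' h.ne,
        absurd h' (not_lt.2 h.le), absurd h' h.ne]

/-- The level of a parse tree: leaves are level 0, a node is one more than the max
level of its children. -/
def treeLevel {α : Type*} : RTree α → ℕ
  | .leaf _ => 0
  | .node ts => (ts.attach.map fun t => treeLevel t.1).foldr max 0 + 1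
termination_by t => sizeOf t
decreasing_by
  have h := List.sizeOf_lt_of_mem t.2
  simp only [RTree.node.sizeOf_spec]
  omega

theorem foldr_max_const {l : List ℕ} {c : ℕ} (hne : l ≠ [])
    (h : ∀ x ∈ l, x = c) : l.foldr max 0 = c := by
  induction l with
  | nil => exact absurd rfl hne
  | cons x xs ih =>
    rcases eq_or_ne xs [] with rfl | hxs
    · simp [h x (by simp)]
    · have := ih hxs (fun y hy => h y (by simp [hy]))
      simp [List.foldr_cons, this, h x (by simp)]

theorem treeLevel_parseTree {α N : Type*} (G : LeveledSLG α N) :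
    ∀ (n : ℕ) (s : α ⊕ N), G.symLevel s = n → treeLevel (G.parseTree s) = n := by
  intro n
  induction n using Nat.strong_induction_on with
  | _ n ih =>
    intro s hs
    cases s with
    | inl s =>
      simp only [LeveledSLG.symLevel, symLevelAux] at hs
      simpa [LeveledSLG.parseTree, treeLevel] using hs
    | inr X =>
      have hlev : G.symLevel (Sum.inr X) = G.level X := rfl
      rw [LeveledSLG.parseTree, treeLevel]
      rw [List.attach_map_val]
      have hmap : ((G.rhs X).attach.map fun s => G.parseTree s.1).map treeLevel
          = (G.rhs X).attach.map fun s => (G.level X - 1 : ℕ) := by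
        rw [List.map_map]
        apply List.map_congr_left
        rintro ⟨y, hy⟩ -
        have h2 : G.level X = n := hlev.symm.trans hs
        have hy1 : G.symLevel y = G.level X - 1 := G.rhs_level X y hy
        have hn1 : G.level X - 1 < n := by
          have := G.level_pos X; omega
        exact ih (G.level X - 1) hn1 y hy1
      rw [hmap]
      have hne : (G.rhs X).attach.map (fun _ => (G.level X - 1 : ℕ)) ≠ [] := by
        simp [G.rhs_ne X]
      rw [foldr_max_const (c := G.level X - 1) hne ?_]
      · have h1 := G.level_pos X
        have h2 : G.level X = n := hlev.symm.trans hs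
        omega
      · intro x hx
        rcases List.mem_map.1 hx with ⟨y, -, rfl⟩
        have h2 : G.level X = n := hlev.symm.trans hs
        omega

theorem memoF_eq_fpTree {α N : Type*} (G : LeveledSLG α N) (H : FPFamily α) :
    ∀ (n : ℕ) (s : α ⊕ N), G.symLevel s = n →
      G.memoF H s = fpTree H (G.parseTree s) n := by
  intro n
  induction n using Nat.strong_induction_on with
  | _ n ih =>
    intro s hs
    cases s with
    | inl s => simp [LeveledSLG.memoF, LeveledSLG.parseTree, fpTree]
    | inr X =>
      have hn : n = G.level X := hs.symm
      subst hn
      rw [LeveledSLG.memoF, LeveledSLG.parseTree, fpTree]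
      have h1 : (((G.rhs X).attach.map fun s => G.parseTree s.1).attach.map
          fun t => fpTree H t.1 (G.level X - 1))
          = (G.rhs X).attach.map fun s => G.memoF H s.1 := by
        rw [List.attach_map_val, List.attach_map_val]
        have h2 := List.attach_map_val (l := (G.rhs X).map G.parseTree)
          (f := fun x => fpTree H x (G.level X - 1))
        simp only [h2, List.map_map]
        apply List.map_congr_left
        intro y hy
        have hy1 : G.symLevel y = G.level X - 1 := G.rhs_level X y hy
        have hn1 : G.level X - 1 < G.level X := by have := G.level_pos X; omega
        exact (ih _ hn1 y hy1).symm
      rw [h1]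

theorem memoF_congr {α Na Nb : Type*} (Ga : LeveledSLG α Na) (Gb : LeveledSLG α Nb)
    (H : FPFamily α) {s : α ⊕ Na} {s' : α ⊕ Nb}
    (h : Ga.parseTree s = Gb.parseTree s') : Ga.memoF H s = Gb.memoF H s' := by
  have la := treeLevel_parseTree Ga (Ga.symLevel s) s rfl
  have lb := treeLevel_parseTree Gb (Gb.symLevel s') s' rfl
  rw [memoF_eq_fpTree Ga H _ s rfl, memoF_eq_fpTree Gb H _ s' rfl, ← la, ← lb, h]

theorem stmt15 {α Na Nb : Type*} (Ga : LeveledSLG α Na) (Gb : LeveledSLG α Nb)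
    (H : FPFamily α) (Ta : ℕ → α ⊕ Na) (Tb : ℕ → α ⊕ Nb) (na nb a b a' b' : ℕ)
    (ha : 1 ≤ a) (hab : a ≤ b) (hbn : b ≤ na)
    (ha' : 1 ≤ a') (hbn' : b' ≤ nb)
    (hlen : b - a = b' - a')
    (htree : ∀ u, u ≤ b - a → Ga.parseTree (Ta (a + u)) = Gb.parseTree (Tb (a' + u))) :
    ∀ t, 1 ≤ t → t ≤ b - a →
      (∃ j, a + t ≤ j ∧ j < b ∧ Ga.memoF H (Ta j) ≠ Ga.memoF H (Ta (j + 1))) →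
      (isLMS (fun ℓ => Ga.memoF H (Ta ℓ)) na (a + t) ↔
        isLMS (fun ℓ => Gb.memoF H (Tb ℓ)) nb (a' + t)) := by
  intro t ht1 ht2 hex
  obtain ⟨j, hj1, hj2, hj3⟩ := hex
  have heq : ∀ u, u ≤ b - a →
      Ga.memoF H (Ta (a + u)) = Gb.memoF H (Tb (a' + u)) := fun u hu =>
    memoF_congr Ga Gb H (htree u hu)
  have hS : isSType (fun ℓ => Ga.memoF H (Ta ℓ)) na (a + t) ↔
      isSType (fun ℓ => Gb.memoF H (Tb ℓ)) nb (a' + t) := by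
    apply isSType_congr _ _ (j - (a + t)) na nb (a + t) (a' + t)
    · intro u hu
      have e1 : a + t + u = a + (t + u) := by omega
      have e2 : a' + t + u = a' + (t + u) := by omega
      simp only [e1, e2]
      exact heq (t + u) (by omega)
    · have e : a + t + (j - (a + t)) = j := by omega
      simp only [e]; simpa using hj3
    · omega
    · omega
  have hL : isLType (fun ℓ => Ga.memoF H (Ta ℓ)) na (a + t - 1) ↔
      isLType (fun ℓ => Gb.memoF H (Tb ℓ)) nb (a' + t - 1) := by
    apply isLType_congr _ _ (j - (a + t - 1)) na nb (a + t - 1) (a' + t - 1)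
    · intro u hu
      have e1 : a + t - 1 + u = a + (t - 1 + u) := by omega
      have e2 : a' + t - 1 + u = a' + (t - 1 + u) := by omega
      simp only [e1, e2]
      exact heq (t - 1 + u) (by omega)
    · have e : a + t - 1 + (j - (a + t - 1)) = j := by omega
      simp only [e]; simpa using hj3
    · omega
    · omega
  simp only [isLMS]
  constructor <;> rintro ⟨-, hs, hl⟩
  · exact ⟨by omega, hS.1 hs, hL.1 hl⟩
  · exact ⟨by omega, hS.2 hs, hL.2 hl⟩
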